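/- Let n > k ≥ 2 and define vector fields on ℝⁿ by X_j = ∂/∂x^j for 1 ≤ j ≤ k−1 and X_k = ∂/∂x^k + x¹ ∂/∂x^{k+1} + (x¹)² ∂/∂x^{k+2} + ⋯ + (x¹)^{n−k} ∂/∂x^n. Then: (a) these vector fields bracket generate T_pℝⁿ at every point p; and (b) for the smooth hypersurface Σ = {x^n = (x¹)²}, the set {x ∈ Σ : x^n = x¹ = 0} is contained in the characteristic set C(Σ), so C(Σ) has Hausdorff dimension at least n − 2. -/

import Mathlib

open scoped ENNReal

/-- The Lie bracket of two vector fields on ℝⁿ. -/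
noncomputable def vecLieBracket {n : ℕ}
    (X Y : EuclideanSpace ℝ (Fin n) → EuclideanSpace ℝ (Fin n)) :
    EuclideanSpace ℝ (Fin n) → EuclideanSpace ℝ (Fin n) :=
  fun p => fderiv ℝ Y p (X p) - fderiv ℝ X p (Y p)

/-- The vector fields obtained from `X 0, …, X (k-1)` by iterated Lie brackets. -/
inductive IsIterBracket {n k : ℕ}
    (X : Fin k → EuclideanSpace ℝ (Fin n) → EuclideanSpace ℝ (Fin n)) :
    (EuclideanSpace ℝ (Fin n) → EuclideanSpace ℝ (Fin n)) → Prop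
  | base (j : Fin k) : IsIterBracket X (X j)
  | bracket {Y Z} : IsIterBracket X Y → IsIterBracket X Z →
      IsIterBracket X (vecLieBracket Y Z)

/-- The model vector fields: X_j = ∂_{x^j} for j ≤ k−1 and
X_k = ∂_{x^k} + x¹∂_{x^{k+1}} + (x¹)²∂_{x^{k+2}} + ⋯ + (x¹)^{n−k}∂_{x^n}
(here 0-indexed: coordinate `i` of ℝⁿ is x^{i+1}). -/
noncomputable def sharpX (n k : ℕ) (hkn : k < n) (hn : 0 < n) (j : Fin k)
    (p : EuclideanSpace ℝ (Fin n)) : EuclideanSpace ℝ (Fin n) :=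
  if (j : ℕ) + 1 = k then
    EuclideanSpace.single (Fin.castLE hkn.le j) (1 : ℝ) +
      ∑ i : Fin n, (if k ≤ (i : ℕ) then
        ((p ⟨0, hn⟩) ^ ((i : ℕ) - k + 1)) • EuclideanSpace.single i (1 : ℝ)
        else 0)
  else EuclideanSpace.single (Fin.castLE hkn.le j) (1 : ℝ)

/-! ### Auxiliary definitions and lemmas -/

/-- The iterated bracket fields `ad(X₀)^m (X_{k-1})` (up to the constant part for `m = 0`). -/
noncomputable def polyField (n k : ℕ) (hn : 0 < n) (m : ℕ)
    (p : EuclideanSpace ℝ (Fin n)) : EuclideanSpace ℝ (Fin n) :=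
  ∑ i : Fin n, (if k ≤ (i : ℕ) then
    ((((i : ℕ) - k + 1).descFactorial m : ℝ) *
        (p ⟨0, hn⟩) ^ ((i : ℕ) - k + 1 - m)) •
      EuclideanSpace.single i (1 : ℝ) else 0)

lemma term_hasFDerivAt {n : ℕ} (hn : 0 < n) (c : ℝ) (e : ℕ)
    (v p : EuclideanSpace ℝ (Fin n)) :
    HasFDerivAt (fun q : EuclideanSpace ℝ (Fin n) => (c * (q ⟨0, hn⟩) ^ e) • v)
      (ContinuousLinearMap.smulRight
        ((c * ((e : ℝ) * (p ⟨0, hn⟩) ^ (e - 1))) •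
          (EuclideanSpace.proj (⟨0, hn⟩ : Fin n) : EuclideanSpace ℝ (Fin n) →L[ℝ] ℝ)) v) p := by
  have h0 : HasFDerivAt (fun q : EuclideanSpace ℝ (Fin n) => q ⟨0, hn⟩)
      (EuclideanSpace.proj (⟨0, hn⟩ : Fin n) : EuclideanSpace ℝ (Fin n) →L[ℝ] ℝ) p := by
    have h := (EuclideanSpace.proj (⟨0, hn⟩ : Fin n) :
      EuclideanSpace ℝ (Fin n) →L[ℝ] ℝ).hasFDerivAt (x := p)
    exact h
  have h1 := ((hasDerivAt_pow e (p ⟨0, hn⟩)).comp_hasFDerivAt p h0).const_mul c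
  have h2 := h1.smul_const v
  rw [smul_smul] at h2
  exact h2

lemma polyField_hasFDerivAt {n : ℕ} (k : ℕ) (hn : 0 < n) (m : ℕ)
    (p : EuclideanSpace ℝ (Fin n)) :
    HasFDerivAt (polyField n k hn m)
      (∑ i : Fin n, (if k ≤ (i : ℕ) then
        ContinuousLinearMap.smulRight
          (((((i : ℕ) - k + 1).descFactorial m : ℝ) *
              ((((i : ℕ) - k + 1 - m : ℕ) : ℝ) *
                (p ⟨0, hn⟩) ^ ((i : ℕ) - k + 1 - m - 1))) •
            (EuclideanSpace.proj (⟨0, hn⟩ : Fin n) : EuclideanSpace ℝ (Fin n) →L[ℝ] ℝ))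
          (EuclideanSpace.single i (1 : ℝ)) else 0)) p := by
  unfold polyField
  apply HasFDerivAt.fun_sum
  intro i _
  by_cases h : k ≤ (i : ℕ)
  · simp only [if_pos h]
    exact term_hasFDerivAt hn _ _ _ p
  · simp only [if_neg h]
    exact hasFDerivAt_const 0 p

lemma fderiv_polyField_apply {n : ℕ} (k : ℕ) (hn : 0 < n) (m : ℕ)
    (p : EuclideanSpace ℝ (Fin n)) :
    fderiv ℝ (polyField n k hn m) p (EuclideanSpace.single (⟨0, hn⟩ : Fin n) 1) =
      polyField n k hn (m + 1) p := by
  rw [(polyField_hasFDerivAt k hn m p).fderiv, ContinuousLinearMap.sum_apply, polyField]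
  refine Finset.sum_congr rfl fun i _ => ?_
  by_cases h : k ≤ (i : ℕ)
  · simp only [if_pos h, ContinuousLinearMap.smulRight_apply,
      ContinuousLinearMap.smul_apply, PiLp.proj_apply, EuclideanSpace.single_apply,
      if_pos rfl, smul_eq_mul, mul_one]
    congr 1
    rw [show (i : ℕ) - k + 1 - m - 1 = (i : ℕ) - k + 1 - (m + 1) from by omega,
      Nat.descFactorial_succ]
    push_cast
    ring
  · simp [h]

lemma sharpX_of_ne {n k : ℕ} (hkn : k < n) (hn : 0 < n) (j : Fin k)
    (h : (j : ℕ) + 1 ≠ k) :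
    sharpX n k hkn hn j = fun _ => EuclideanSpace.single (Fin.castLE hkn.le j) (1 : ℝ) := by
  funext p
  simp [sharpX, h]

lemma sharpX_last {n k : ℕ} (hkn : k < n) (hn : 0 < n) (j : Fin k)
    (h : (j : ℕ) + 1 = k) :
    sharpX n k hkn hn j = fun p =>
      EuclideanSpace.single (Fin.castLE hkn.le j) (1 : ℝ) + polyField n k hn 0 p := by
  funext p
  simp only [sharpX, if_pos h, polyField, Nat.descFactorial_zero, Nat.cast_one, one_mul,
    Nat.sub_zero]

lemma bracket_polyField {n k : ℕ} (hk : 2 ≤ k) (hkn : k < n) (hn : 0 < n) (m : ℕ) :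
    vecLieBracket (sharpX n k hkn hn ⟨0, by omega⟩) (polyField n k hn m) =
      polyField n k hn (m + 1) := by
  funext p
  have hX := sharpX_of_ne hkn hn (⟨0, by omega⟩ : Fin k) (by simp; omega)
  unfold vecLieBracket
  rw [hX, fderiv_const_apply]
  have hcast : Fin.castLE hkn.le (⟨0, by omega⟩ : Fin k) = (⟨0, hn⟩ : Fin n) := rfl
  rw [hcast]
  simp only [ContinuousLinearMap.zero_apply, Pi.zero_apply, sub_zero]
  exact fderiv_polyField_apply k hn m p

lemma bracket_first {n k : ℕ} (hk : 2 ≤ k) (hkn : k < n) (hn : 0 < n) :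
    vecLieBracket (sharpX n k hkn hn ⟨0, by omega⟩) (sharpX n k hkn hn ⟨k - 1, by omega⟩) =
      polyField n k hn 1 := by
  funext p
  have hX := sharpX_of_ne hkn hn (⟨0, by omega⟩ : Fin k) (by simp; omega)
  have hY := sharpX_last hkn hn (⟨k - 1, by omega⟩ : Fin k) (by simp; omega)
  unfold vecLieBracket
  rw [hX, hY, fderiv_const_apply]
  have hcast : Fin.castLE hkn.le (⟨0, by omega⟩ : Fin k) = (⟨0, hn⟩ : Fin n) := rfl
  rw [hcast]
  simp only [ContinuousLinearMap.zero_apply, Pi.zero_apply, sub_zero]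
  rw [fderiv_const_add]
  exact fderiv_polyField_apply k hn 0 p

lemma isIter_polyField {n k : ℕ} (hk : 2 ≤ k) (hkn : k < n) (hn : 0 < n) (m : ℕ) :
    IsIterBracket (sharpX n k hkn hn) (polyField n k hn (m + 1)) := by
  induction m with
  | zero =>
    have h := IsIterBracket.bracket (IsIterBracket.base (X := sharpX n k hkn hn) ⟨0, by omega⟩)
      (IsIterBracket.base (X := sharpX n k hkn hn) ⟨k - 1, by omega⟩)
    rwa [bracket_first hk hkn hn] at h
  | succ m ih =>
    have h := IsIterBracket.bracket (IsIterBracket.base (X := sharpX n k hkn hn) ⟨0, by omega⟩) ih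
    rwa [bracket_polyField hk hkn hn] at h

lemma span_top {n k : ℕ} (hk : 2 ≤ k) (hkn : k < n) (hn : 0 < n)
    (p : EuclideanSpace ℝ (Fin n)) :
    Submodule.span ℝ {v : EuclideanSpace ℝ (Fin n) |
      ∃ Z, IsIterBracket (sharpX n k hkn hn) Z ∧ Z p = v} = ⊤ := by
  set V : Set (EuclideanSpace ℝ (Fin n)) :=
    {v | ∃ Z, IsIterBracket (sharpX n k hkn hn) Z ∧ Z p = v} with hV
  have hpoly : ∀ m : ℕ, polyField n k hn (m + 1) p ∈ Submodule.span ℝ V :=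
    fun m => Submodule.subset_span ⟨_, isIter_polyField hk hkn hn m, rfl⟩
  have hbase : ∀ j : Fin k, sharpX n k hkn hn j p ∈ Submodule.span ℝ V :=
    fun j => Submodule.subset_span ⟨_, IsIterBracket.base j, rfl⟩
  -- the key downward-induction step
  have step : ∀ i : Fin n, k ≤ (i : ℕ) →
      (∀ i' : Fin n, (i : ℕ) < (i' : ℕ) →
        EuclideanSpace.single i' (1 : ℝ) ∈ Submodule.span ℝ V) →
      EuclideanSpace.single i (1 : ℝ) ∈ Submodule.span ℝ V := by
    intro i hki IH
    set d : ℕ := (i : ℕ) - k + 1 with hd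
    have hsplit : polyField n k hn d p =
        (d.factorial : ℝ) • EuclideanSpace.single i (1 : ℝ) +
          ∑ i' : Fin n, (if (i : ℕ) < (i' : ℕ) then
            ((((i' : ℕ) - k + 1).descFactorial d : ℝ) *
                (p ⟨0, hn⟩) ^ ((i' : ℕ) - k + 1 - d)) •
              EuclideanSpace.single i' (1 : ℝ) else 0) := by
      unfold polyField
      have hterm : ∀ i' : Fin n,
          (if k ≤ (i' : ℕ) then
            ((((i' : ℕ) - k + 1).descFactorial d : ℝ) *
                (p ⟨0, hn⟩) ^ ((i' : ℕ) - k + 1 - d)) •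
              EuclideanSpace.single i' (1 : ℝ) else 0) =
          (if i' = i then (d.factorial : ℝ) • EuclideanSpace.single i (1 : ℝ) else 0) +
          (if (i : ℕ) < (i' : ℕ) then
            ((((i' : ℕ) - k + 1).descFactorial d : ℝ) *
                (p ⟨0, hn⟩) ^ ((i' : ℕ) - k + 1 - d)) •
              EuclideanSpace.single i' (1 : ℝ) else 0) := ?_
      · rw [Finset.sum_congr rfl fun i' _ => hterm i', Finset.sum_add_distrib,
          Finset.sum_ite_eq' Finset.univ i
            (fun _ => (d.factorial : ℝ) • EuclideanSpace.single i (1 : ℝ)),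
          if_pos (Finset.mem_univ i)]
      intro i'
      rcases lt_trichotomy ((i' : ℕ)) ((i : ℕ)) with hlt | heq | hgt
      · have hne : i' ≠ i := by intro h; rw [h] at hlt; omega
        rw [if_neg hne, if_neg (show ¬ (i : ℕ) < (i' : ℕ) from by omega), add_zero]
        by_cases h : k ≤ (i' : ℕ)
        · rw [if_pos h]
          have : ((i' : ℕ) - k + 1).descFactorial d = 0 :=
            Nat.descFactorial_eq_zero_iff_lt.2 (by omega)
          rw [this]
          simp
        · rw [if_neg h]
      · have heq' : i' = i := Fin.ext heq
        subst heq'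
        rw [if_pos hki, if_pos rfl, if_neg (show ¬ (i' : ℕ) < (i' : ℕ) from by omega),
          add_zero]
        have h1 : (i' : ℕ) - k + 1 - d = 0 := by omega
        have h2 : ((i' : ℕ) - k + 1).descFactorial d = d.factorial := by
          rw [show (i' : ℕ) - k + 1 = d from rfl, Nat.descFactorial_self]
        rw [h1, h2, pow_zero, mul_one]
      · have hne : i' ≠ i := by intro h; rw [h] at hgt; omega
        rw [if_pos (show k ≤ (i' : ℕ) from by omega), if_neg hne,
          if_pos (show (i : ℕ) < (i' : ℕ) from hgt), zero_add]
    have h1 : polyField n k hn d p ∈ Submodule.span ℝ V := by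
      obtain ⟨m, hm⟩ : ∃ m, d = m + 1 := ⟨d - 1, by omega⟩
      rw [hm]; exact hpoly m
    have h2 : (∑ i' : Fin n, (if (i : ℕ) < (i' : ℕ) then
        ((((i' : ℕ) - k + 1).descFactorial d : ℝ) *
            (p ⟨0, hn⟩) ^ ((i' : ℕ) - k + 1 - d)) •
          EuclideanSpace.single i' (1 : ℝ) else 0)) ∈ Submodule.span ℝ V := by
      refine Submodule.sum_mem _ fun i' _ => ?_
      by_cases h : (i : ℕ) < (i' : ℕ)
      · rw [if_pos h]
        exact Submodule.smul_mem _ _ (IH i' h)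
      · rw [if_neg h]; exact Submodule.zero_mem _
    have h3 := Submodule.sub_mem _ h1 h2
    rw [hsplit, add_sub_cancel_right] at h3
    have h4 := Submodule.smul_mem _ ((d.factorial : ℝ))⁻¹ h3
    rwa [smul_smul, inv_mul_cancel₀ (by exact_mod_cast d.factorial_ne_zero), one_smul] at h4
  have all_hi : ∀ t : ℕ, ∀ i : Fin n, k ≤ (i : ℕ) → n ≤ (i : ℕ) + 1 + t →
      EuclideanSpace.single i (1 : ℝ) ∈ Submodule.span ℝ V := by
    intro t
    induction t with
    | zero =>
      intro i hki hni
      exact step i hki fun i' hi' => absurd i'.2 (by omega)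
    | succ t ih =>
      intro i hki hni
      exact step i hki fun i' hi' => ih i' (by omega) (by omega)
  have all_ge : ∀ i : Fin n, k ≤ (i : ℕ) →
      EuclideanSpace.single i (1 : ℝ) ∈ Submodule.span ℝ V :=
    fun i h => all_hi n i h (by omega)
  -- the coefficients-only field at level 0 is in the span
  have hpoly0 : polyField n k hn 0 p ∈ Submodule.span ℝ V := by
    unfold polyField
    refine Submodule.sum_mem _ fun i' _ => ?_
    by_cases h : k ≤ (i' : ℕ)
    · rw [if_pos h]
      exact Submodule.smul_mem _ _ (all_ge i' h)
    · rw [if_neg h]; exact Submodule.zero_mem _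
  have hek1 : EuclideanSpace.single
      (Fin.castLE hkn.le (⟨k - 1, by omega⟩ : Fin k)) (1 : ℝ) ∈ Submodule.span ℝ V := by
    have hlast := hbase ⟨k - 1, by omega⟩
    rw [sharpX_last hkn hn _ (by simp; omega)] at hlast
    have := Submodule.sub_mem _ hlast hpoly0
    rwa [add_sub_cancel_right] at this
  rw [eq_top_iff]
  rintro x -
  rw [← (EuclideanSpace.basisFun (Fin n) ℝ).sum_repr x]
  refine Submodule.sum_mem _ fun i _ => Submodule.smul_mem _ _ ?_
  rw [EuclideanSpace.basisFun_apply]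
  by_cases hik : k ≤ (i : ℕ)
  · exact all_ge i hik
  · by_cases hlast : (i : ℕ) + 1 = k
    · have : Fin.castLE hkn.le (⟨k - 1, by omega⟩ : Fin k) = i := by
        apply Fin.ext; simp; omega
      rwa [this] at hek1
    · have hmem := hbase ⟨(i : ℕ), by omega⟩
      rw [sharpX_of_ne hkn hn _ (by simpa using hlast)] at hmem
      have : Fin.castLE hkn.le (⟨(i : ℕ), by omega⟩ : Fin k) = i := by
        apply Fin.ext; rfl
      rwa [this] at hmem

/-- Sharpness of the bound n − 2 on the Hausdorff dimension of characteristic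
sets: the vector fields `sharpX` bracket generate at every point, and for the
hypersurface Σ = {x^n = (x¹)²} the set {x ∈ Σ : x^n = x¹ = 0} is contained in
the characteristic set C(Σ), which therefore has Hausdorff dimension ≥ n − 2. -/
theorem sharp_example_characteristic_set
    (n k : ℕ) (hk : 2 ≤ k) (hkn : k < n) :
    ∀ hn : 0 < n,
    (∀ p : EuclideanSpace ℝ (Fin n), Submodule.span ℝ
        {v : EuclideanSpace ℝ (Fin n) |
          ∃ Z, IsIterBracket (sharpX n k hkn hn) Z ∧ Z p = v} = ⊤) ∧
    (∀ S C : Set (EuclideanSpace ℝ (Fin n)),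
      S = {p | p ⟨n - 1, by omega⟩ = (p ⟨0, hn⟩) ^ 2} →
      C = {p | p ∈ S ∧ ∀ j : Fin k,
          fderiv ℝ (fun q : EuclideanSpace ℝ (Fin n) =>
              q ⟨n - 1, by omega⟩ - (q ⟨0, hn⟩) ^ 2) p
            (sharpX n k hkn hn j p) = 0} →
      {p : EuclideanSpace ℝ (Fin n) |
          p ⟨n - 1, by omega⟩ = 0 ∧ p ⟨0, hn⟩ = 0} ⊆ C ∧
        (n : ℝ≥0∞) - 2 ≤ dimH C) := by
  intro hn
  refine ⟨span_top hk hkn hn, ?_⟩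
  intro S C hS hC
  have hn1 : (n : ℕ) - 1 < n := by omega
  -- the subset claim
  have hsub : {p : EuclideanSpace ℝ (Fin n) |
      p ⟨n - 1, by omega⟩ = 0 ∧ p ⟨0, hn⟩ = 0} ⊆ C := by
    intro p hp
    obtain ⟨hp1, hp0⟩ := hp
    rw [hC]
    constructor
    · rw [hS]
      show p ⟨n - 1, by omega⟩ = (p ⟨0, hn⟩) ^ 2
      rw [hp1, hp0]; ring
    · intro j
      -- at points with x¹ = 0 the big vector field degenerates to a single coordinate vector
      have hXval : sharpX n k hkn hn j p =
          EuclideanSpace.single (Fin.castLE hkn.le j) (1 : ℝ) := by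
        unfold sharpX
        split_ifs with hj
        · have hzero : ∀ i : Fin n, (p ⟨0, hn⟩) ^ ((i : ℕ) - k + 1) = (0 : ℝ) := by
            intro i
            rw [hp0]
            exact zero_pow (by omega)
          rw [Finset.sum_eq_zero (fun i _ => by
            by_cases h : k ≤ (i : ℕ)
            · rw [if_pos h, hzero i, zero_smul]
            · rw [if_neg h]), add_zero]
        · rfl
      -- compute the derivative of the defining function
      have hφ : HasFDerivAt (fun q : EuclideanSpace ℝ (Fin n) =>
          q ⟨n - 1, hn1⟩ - (q ⟨0, hn⟩) ^ 2)
          ((EuclideanSpace.proj (⟨n - 1, hn1⟩ : Fin n) :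
              EuclideanSpace ℝ (Fin n) →L[ℝ] ℝ) -
            ((2 : ℝ) * (p ⟨0, hn⟩) ^ 1) •
              (EuclideanSpace.proj (⟨0, hn⟩ : Fin n) :
                EuclideanSpace ℝ (Fin n) →L[ℝ] ℝ)) p := by
        have h1 : HasFDerivAt (fun q : EuclideanSpace ℝ (Fin n) => q ⟨n - 1, hn1⟩)
            (EuclideanSpace.proj (⟨n - 1, hn1⟩ : Fin n) :
              EuclideanSpace ℝ (Fin n) →L[ℝ] ℝ) p := by
          have h := (EuclideanSpace.proj (⟨n - 1, hn1⟩ : Fin n) :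
            EuclideanSpace ℝ (Fin n) →L[ℝ] ℝ).hasFDerivAt (x := p)
          exact h
        have h0 : HasFDerivAt (fun q : EuclideanSpace ℝ (Fin n) => q ⟨0, hn⟩)
            (EuclideanSpace.proj (⟨0, hn⟩ : Fin n) :
              EuclideanSpace ℝ (Fin n) →L[ℝ] ℝ) p := by
          have h := (EuclideanSpace.proj (⟨0, hn⟩ : Fin n) :
            EuclideanSpace ℝ (Fin n) →L[ℝ] ℝ).hasFDerivAt (x := p)
          exact h
        exact h1.sub (by convert (hasDerivAt_pow 2 (p ⟨0, hn⟩)).comp_hasFDerivAt p h0 using 2 <;> norm_num <;> rfl)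
      rw [hφ.fderiv, hXval, ContinuousLinearMap.sub_apply,
        ContinuousLinearMap.smul_apply, PiLp.proj_apply, PiLp.proj_apply,
        EuclideanSpace.single_apply, EuclideanSpace.single_apply, hp0]
      have hne : ¬ ((⟨n - 1, hn1⟩ : Fin n) = Fin.castLE hkn.le j) := by
        intro h
        have := congrArg Fin.val h
        simp only [Fin.coe_castLE] at this
        have hj := j.2
        omega
      rw [if_neg hne]
      simp
  refine ⟨hsub, ?_⟩
  -- the Hausdorff dimension bound
  have hn3 : 3 ≤ n := by omega
  set T : Set (EuclideanSpace ℝ (Fin n)) :=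
    {p | p ⟨n - 1, by omega⟩ = 0 ∧ p ⟨0, hn⟩ = 0} with hT
  -- an isometric (in particular bi-Lipschitz) copy of ℝ^{n-2} inside T
  set f : EuclideanSpace ℝ (Fin (n - 2)) → EuclideanSpace ℝ (Fin n) :=
    fun x => WithLp.toLp 2 fun i => if h : 0 < (i : ℕ) ∧ (i : ℕ) < n - 1 then x ⟨(i : ℕ) - 1, by omega⟩ else 0
    with hf
  have hfg : ∀ (x : EuclideanSpace ℝ (Fin (n - 2))) (j : Fin (n - 2)),
      f x ⟨(j : ℕ) + 1, by omega⟩ = x j := by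
    intro x j
    have hcond : 0 < ((⟨(j : ℕ) + 1, by omega⟩ : Fin n) : ℕ) ∧
        ((⟨(j : ℕ) + 1, by omega⟩ : Fin n) : ℕ) < n - 1 := by
      constructor
      · simp
      · have := j.2; simp; omega
    simp only [hf, PiLp.toLp_apply]
    rw [dif_pos hcond]
    exact congrArg x (by apply Fin.ext; simp)
  have hanti : AntilipschitzWith 1 f := by
    apply AntilipschitzWith.of_le_mul_dist
    intro x y
    rw [NNReal.coe_one, one_mul, EuclideanSpace.dist_eq, EuclideanSpace.dist_eq]
    apply Real.sqrt_le_sqrt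
    set g : Fin (n - 2) → Fin n := fun j => ⟨(j : ℕ) + 1, by omega⟩ with hg
    have hginj : Function.Injective g := by
      intro a b hab
      apply Fin.ext
      have := congrArg Fin.val hab
      simpa [hg] using this
    have himg : ∑ j : Fin (n - 2), dist (x j) (y j) ^ 2 =
        ∑ i ∈ Finset.univ.image g, dist (f x i) (f y i) ^ 2 := by
      rw [Finset.sum_image (fun a _ b _ hab => hginj hab)]
      refine Finset.sum_congr rfl fun j _ => ?_
      rw [show f x (g j) = x j from hfg x j, show f y (g j) = y j from hfg y j]
    rw [himg]
    refine Finset.sum_le_sum_of_subset_of_nonneg (Finset.subset_univ _) ?_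
    intro i _ _
    positivity
  have himage : f '' Set.univ ⊆ T := by
    rintro _ ⟨x, -, rfl⟩
    constructor
    · show f x ⟨n - 1, by omega⟩ = 0
      simp only [hf, PiLp.toLp_apply]
      rw [dif_neg (by simp)]
    · show f x ⟨0, hn⟩ = 0
      simp only [hf, PiLp.toLp_apply]
      rw [dif_neg (by simp)]
  have hTC : T ⊆ C := hsub
  calc (n : ℝ≥0∞) - 2 ≤ ((n - 2 : ℕ) : ℝ≥0∞) := by
        rw [tsub_le_iff_right]
        rw [show ((2 : ℝ≥0∞)) = ((2 : ℕ) : ℝ≥0∞) from by norm_num, ← Nat.cast_add]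
        exact Nat.cast_le.2 (by omega)
    _ = dimH (Set.univ : Set (EuclideanSpace ℝ (Fin (n - 2)))) := by
        rw [Real.dimH_univ_eq_finrank, finrank_euclideanSpace_fin]
    _ ≤ dimH (f '' Set.univ) := hanti.le_dimH_image _
    _ ≤ dimH T := dimH_mono himage
    _ ≤ dimH C := dimH_mono hTC
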